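/- (The Schur restriction is well-defined / basis independence of the generalized Schur complement.) Let A be a d×d, B a d×e, C an e×d, and D an e×e real matrix, and let M = [[A, B], [C, D]] be the corresponding (d+e)×(d+e) block matrix. Let P be an invertible d×d real matrix and Q an invertible e×e real matrix, and set M' := [[P⁻¹, 0], [0, Q⁻¹]]·M·[[P, 0], [0, Q]], with block decomposition M' = [[A', B'], [C', D']] (so A' = P⁻¹AP, B' = P⁻¹BQ, C' = Q⁻¹CP, D' = Q⁻¹DQ). If M' is positive semi-definite, then A' − B'·(D')†·C' = P⁻¹·(A − B·D†·C)·P, where D† and (D')† are the Moore–Penrose pseudoinverses of D and D' respectively. -/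

import Mathlib

open Matrix

/-- `Ddag` is a Moore–Penrose pseudoinverse of `D`. -/
def IsMoorePenrose {n m : Type*} [Fintype n] [Fintype m]
    (D : Matrix n m ℝ) (Ddag : Matrix m n ℝ) : Prop :=
  D * Ddag * D = D ∧ Ddag * D * Ddag = Ddag ∧
    (D * Ddag)ᵀ = D * Ddag ∧ (Ddag * D)ᵀ = Ddag * D

section aux

variable {d e : Type*} [Fintype d] [Fintype e] [DecidableEq d] [DecidableEq e]

lemma unit_cancel {e m : Type*} [Fintype e] [Fintype m] [DecidableEq e]
    (Q : Matrix e e ℝ) (hQ : IsUnit Q) (X : Matrix e m ℝ) : Q * (Q⁻¹ * X) = X := by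
  rw [← Matrix.mul_assoc, Matrix.mul_nonsing_inv Q ((Matrix.isUnit_iff_isUnit_det Q).mp hQ),
    Matrix.one_mul]

/-- If `S` is symmetric and `S * (NᵀN) = NᵀN`, then `N * S = N`. -/
lemma cancel_aux {k : Type*} [Fintype k] (N : Matrix k e ℝ) (S : Matrix e e ℝ)
    (hS : Sᵀ = S) (h : S * (Nᵀ * N) = Nᵀ * N) : N * S = N := by
  have hGsymm : (Nᵀ * N)ᵀ = Nᵀ * N := by
    rw [Matrix.transpose_mul, Matrix.transpose_transpose]
  have h' : (Nᵀ * N) * S = Nᵀ * N := by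
    have h2 := congrArg Matrix.transpose h
    rwa [Matrix.transpose_mul, hS, hGsymm] at h2
  have hz : (N * S - N)ᵀ * (N * S - N) = 0 := by
    have expand : (N * S - N)ᵀ * (N * S - N) =
        Sᵀ * ((Nᵀ * N) * S) - Sᵀ * (Nᵀ * N) - ((Nᵀ * N) * S) + Nᵀ * N := by
      rw [Matrix.transpose_sub, Matrix.transpose_mul, Matrix.sub_mul, Matrix.mul_sub,
        Matrix.mul_sub]
      simp only [Matrix.mul_assoc]
      abel
    rw [expand, hS, h', h]
    abel
  have hz' : (N * S - N)ᴴ * (N * S - N) = 0 := by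
    rw [Matrix.conjTranspose_eq_transpose_of_trivial]; exact hz
  have h0 : N * S - N = 0 := Matrix.conjTranspose_mul_self_eq_zero.mp hz'
  linear_combination (norm := noncomm_ring) h0

/-- Range conditions extracted from positive semidefiniteness of the block matrix. -/
lemma psd_range_aux (A : Matrix d d ℝ) (B : Matrix d e ℝ) (C : Matrix e d ℝ)
    (D : Matrix e e ℝ) (Ddag : Matrix e e ℝ) (hD : IsMoorePenrose D Ddag)
    (hM : (Matrix.fromBlocks A B C D).PosSemidef) :
    B * Ddag * D = B ∧ D * Ddag * C = C := by
  obtain ⟨N, hN⟩ : ∃ N : Matrix (d ⊕ e) (d ⊕ e) ℝ, Matrix.fromBlocks A B C D = Nᴴ * N := by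
    open MatrixOrder in exact CStarAlgebra.nonneg_iff_eq_star_mul_self.mp hM.nonneg
  rw [Matrix.conjTranspose_eq_transpose_of_trivial] at hN
  set N₁ : Matrix (d ⊕ e) d ℝ := N.submatrix id Sum.inl with hN₁
  set N₂ : Matrix (d ⊕ e) e ℝ := N.submatrix id Sum.inr with hN₂
  have hB : B = N₁ᵀ * N₂ := by
    ext i j
    have := congrFun (congrFun hN (Sum.inl i)) (Sum.inr j)
    simpa [Matrix.mul_apply, Matrix.fromBlocks, hN₁, hN₂, Matrix.submatrix,
      Matrix.transpose_apply] using this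
  have hC : C = N₂ᵀ * N₁ := by
    ext i j
    have := congrFun (congrFun hN (Sum.inr i)) (Sum.inl j)
    simpa [Matrix.mul_apply, Matrix.fromBlocks, hN₁, hN₂, Matrix.submatrix,
      Matrix.transpose_apply] using this
  have hDD : D = N₂ᵀ * N₂ := by
    ext i j
    have := congrFun (congrFun hN (Sum.inr i)) (Sum.inr j)
    simpa [Matrix.mul_apply, Matrix.fromBlocks, hN₁, hN₂, Matrix.submatrix,
      Matrix.transpose_apply] using this
  obtain ⟨h1, h2, h3, h4⟩ := hD
  have hDsymm : Dᵀ = D := by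
    rw [hDD, Matrix.transpose_mul, Matrix.transpose_transpose]
  have hd1 : Ddag * D * D = D := by
    have h5 : Dᵀ * (Ddag * D)ᵀ = Dᵀ := by rw [hDsymm, h4, ← Matrix.mul_assoc, h1]
    have h6 := congrArg Matrix.transpose h5
    simp only [Matrix.transpose_mul, Matrix.transpose_transpose] at h6
    exact h6
  have key1 : N₂ * (Ddag * D) = N₂ := by
    refine cancel_aux N₂ (Ddag * D) h4 ?_
    rw [← hDD]; exact hd1
  have key2 : N₂ * (D * Ddag) = N₂ := by
    refine cancel_aux N₂ (D * Ddag) h3 ?_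
    rw [← hDD]; exact h1
  constructor
  · rw [hB]
    calc N₁ᵀ * N₂ * Ddag * D = N₁ᵀ * (N₂ * (Ddag * D)) := by
          simp only [Matrix.mul_assoc]
      _ = N₁ᵀ * N₂ := by rw [key1]
  · have h7 : Cᵀ * (D * Ddag) = Cᵀ := by
      rw [hC, Matrix.transpose_mul, Matrix.transpose_transpose, Matrix.mul_assoc, key2]
    have h8 := congrArg Matrix.transpose h7
    rw [Matrix.transpose_mul, Matrix.transpose_transpose, h3] at h8
    exact h8

end aux

/-- Basis independence of the generalized Schur complement (the Schur restriction is
well-defined): if the conjugated block matrix `M' = [[P⁻¹AP, P⁻¹BQ], [Q⁻¹CP, Q⁻¹DQ]]` is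
positive semi-definite, then its Schur complement equals `P⁻¹ (A - B D† C) P`. -/
theorem schur_restriction_well_defined
    {d e : Type*} [Fintype d] [Fintype e] [DecidableEq d] [DecidableEq e]
    (A : Matrix d d ℝ) (B : Matrix d e ℝ) (C : Matrix e d ℝ) (D : Matrix e e ℝ)
    (P : Matrix d d ℝ) (Q : Matrix e e ℝ) (hP : IsUnit P) (hQ : IsUnit Q)
    (Ddag : Matrix e e ℝ) (hD : IsMoorePenrose D Ddag)
    (D'dag : Matrix e e ℝ) (hD' : IsMoorePenrose (Q⁻¹ * D * Q) D'dag)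
    (hM' : (Matrix.fromBlocks (P⁻¹ * A * P) (P⁻¹ * B * Q)
        (Q⁻¹ * C * P) (Q⁻¹ * D * Q)).PosSemidef) :
    (P⁻¹ * A * P) - (P⁻¹ * B * Q) * D'dag * (Q⁻¹ * C * P) =
      P⁻¹ * (A - B * Ddag * C) * P := by
  set B' := P⁻¹ * B * Q with hB'
  set C' := Q⁻¹ * C * P with hC'
  set D' := Q⁻¹ * D * Q with hD'def
  obtain ⟨hr1, hr2⟩ := psd_range_aux (P⁻¹ * A * P) B' C' D' D'dag hD' hM'
  set E := Q⁻¹ * Ddag * Q with hE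
  have hDED : D' * E * D' = D' := by
    rw [hD'def, hE]
    simp only [Matrix.mul_assoc, unit_cancel Q hQ]
    rw [← Matrix.mul_assoc Ddag D Q, ← Matrix.mul_assoc D (Ddag * D) Q,
      ← Matrix.mul_assoc D Ddag D, hD.1]
  have keyeq : B' * D'dag * C' = B' * E * C' := by
    symm
    calc B' * E * C' = (B' * D'dag * D') * E * (D' * D'dag * C') := by rw [hr1, hr2]
      _ = B' * D'dag * (D' * E * D') * (D'dag * C') := by simp only [Matrix.mul_assoc]
      _ = B' * D'dag * D' * (D'dag * C') := by rw [hDED]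
      _ = B' * (D'dag * D' * D'dag) * C' := by simp only [Matrix.mul_assoc]
      _ = B' * D'dag * C' := by rw [hD'.2.1]
  rw [keyeq]
  have hBE : B' * E * C' = P⁻¹ * (B * Ddag * C) * P := by
    rw [hB', hC', hE]
    simp only [Matrix.mul_assoc, unit_cancel Q hQ]
  rw [hBE, Matrix.mul_sub, Matrix.sub_mul]
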